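/- (Closedness of the set of 1-vanishing polynomials with bounded linear coefficients.) Let r ≥ 2 and m ≥ 2 be integers and K > 0. For each i ∈ {1,…,m}, let σ̂^i_K(r,1,m) denote the set of all P ∈ 𝒫(r,m) for which there exists a ∈ ℝ^{m−1} with all entries of absolute value at most K such that P satisfies the 1-vanishing condition on the 1-truncation parametrized by the i-th coordinate with linear coefficients a. Then each set σ̂^i_K(r,1,m), as well as the union ⋃_{i=1}^m σ̂^i_K(r,1,m), is a closed subset of 𝒫(r,m); in particular these sets coincide with their closures in 𝒫(r,m). -/

import Mathlib

open MvPolynomial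

noncomputable section

/-- `𝒫(r,n)`: polynomials in `n` real variables with zero constant term and
total degree at most `r`. -/
def PolySpace (r n : ℕ) : Set (MvPolynomial (Fin n) ℝ) :=
  {P | P.coeff 0 = 0 ∧ P.totalDegree ≤ r}

/-- Sup-norm of the coefficients of a polynomial. -/
def polyNorm {n : ℕ} (P : MvPolynomial (Fin n) ℝ) : ℝ :=
  ⨆ μ : Fin n →₀ ℕ, |P.coeff μ|

/-- The `s`-truncation parametrized by the `i`-th coordinate with coefficients `a`:
the curve whose `i`-th component is `t` and whose `j`-th component (`j ≠ i`) is
`∑_{k=1}^{s} a_{jk} t^k`. -/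
def truncCurve {m : ℕ} (s : ℕ) (i : Fin m) (a : Fin m → Fin s → ℝ) : ℝ → Fin m → ℝ :=
  fun t j => if j = i then t else ∑ k : Fin s, a j k * t ^ ((k : ℕ) + 1)

/-- `P` satisfies the `s`-vanishing condition on the curve `γ`. -/
def SVanishing {m : ℕ} (s : ℕ) (P : MvPolynomial (Fin m) ℝ) (γ : ℝ → Fin m → ℝ) : Prop :=
  ∀ ℓ : Fin m, ∀ α ≤ s, iteratedDeriv α (fun t => eval (γ t) (pderiv ℓ P)) 0 = 0

/-- Closure with respect to the coefficient sup-norm. -/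
def closureNorm {n : ℕ} (A : Set (MvPolynomial (Fin n) ℝ)) : Set (MvPolynomial (Fin n) ℝ) :=
  {P | ∀ ε > (0:ℝ), ∃ Q ∈ A, polyNorm (P - Q) < ε}

/-- `σ^i(r,s,m)`: polynomials of `𝒫(r,m)` that satisfy the `s`-vanishing condition on
some `s`-truncation parametrized by the `i`-th coordinate. -/
def sigmaI (r s m : ℕ) (i : Fin m) : Set (MvPolynomial (Fin m) ℝ) :=
  {P | P ∈ PolySpace r m ∧ ∃ a : Fin m → Fin s → ℝ, SVanishing s P (truncCurve s i a)}

/-- `σ̂^i_K(r,1,m)`: polynomials of `𝒫(r,m)` satisfying the `1`-vanishing condition on a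
`1`-truncation parametrized by the `i`-th coordinate whose linear coefficients are
bounded by `K` in absolute value. -/
def sigmaHatIK (r m : ℕ) (K : ℝ) (i : Fin m) : Set (MvPolynomial (Fin m) ℝ) :=
  {P | P ∈ PolySpace r m ∧ ∃ a : Fin m → Fin 1 → ℝ,
    (∀ j : Fin m, |a j 0| ≤ K) ∧ SVanishing 1 P (truncCurve 1 i a)}

lemma my_coeff_pderiv {n : ℕ} (ℓ : Fin n) (ν : Fin n →₀ ℕ) (f : MvPolynomial (Fin n) ℝ) :
    coeff ν (pderiv ℓ f) = ((ν ℓ : ℝ) + 1) * coeff (ν + Finsupp.single ℓ 1) f := by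
  induction f using MvPolynomial.induction_on' with
  | add p q hp hq => simp [map_add, coeff_add, hp, hq, mul_add]
  | monomial μ a =>
    rw [pderiv_monomial, coeff_monomial, coeff_monomial]
    by_cases hμ : Finsupp.single ℓ 1 ≤ μ
    · have hiff : (μ - Finsupp.single ℓ 1 = ν) ↔ (μ = ν + Finsupp.single ℓ 1) := by
        rw [tsub_eq_iff_eq_add_of_le hμ, add_comm]
      by_cases h : μ = ν + Finsupp.single ℓ 1
      · rw [if_pos (hiff.2 h), if_pos h, h]
        simp [Finsupp.add_apply, Finsupp.single_apply]
        ring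
      · rw [if_neg (fun hc => h (hiff.1 hc)), if_neg h, mul_zero]
    · have h0 : μ ℓ = 0 := by
        by_contra h
        exact hμ (Finsupp.single_le_iff.2 (Nat.one_le_iff_ne_zero.2 h))
      have h1 : μ ≠ ν + Finsupp.single ℓ 1 := by
        intro hc
        rw [hc] at h0
        simp at h0
      rw [if_neg h1, mul_zero, h0]
      simp

lemma abs_coeff_le_polyNorm {n : ℕ} (X : MvPolynomial (Fin n) ℝ) (μ : Fin n →₀ ℕ) :
    |X.coeff μ| ≤ polyNorm X := by
  apply le_ciSup (f := fun μ => |X.coeff μ|) ?_ μ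
  apply Set.Finite.bddAbove
  apply Set.Finite.subset (Set.Finite.insert 0 (X.support.image fun μ => |X.coeff μ|).finite_toSet)
  rintro x ⟨ν, rfl⟩
  by_cases h : ν ∈ X.support
  · exact Set.mem_insert_iff.2 (Or.inr (Finset.mem_coe.2 (Finset.mem_image_of_mem _ h)))
  · simp [MvPolynomial.notMem_support_iff.1 h]

lemma polyNorm_zero {n : ℕ} : polyNorm (0 : MvPolynomial (Fin n) ℝ) = 0 := by
  simp [polyNorm, ciSup_const]

lemma hasDerivAt_eval_smul {n : ℕ} (v : Fin n → ℝ) (R : MvPolynomial (Fin n) ℝ) (c : ℝ) :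
    HasDerivAt (fun t : ℝ => eval (t • v) R) (∑ j, v j * eval (c • v) (pderiv j R)) c := by
  induction R using MvPolynomial.induction_on with
  | C a =>
    simp only [eval_C, pderiv_C, map_zero, mul_zero, Finset.sum_const_zero]
    exact hasDerivAt_const c a
  | add p q hp hq =>
    simp only [map_add, mul_add, Finset.sum_add_distrib]
    exact hp.add hq
  | mul_X p k hp =>
    have h2 : HasDerivAt (fun t : ℝ => t * v k) (v k) c := by
      simpa using (hasDerivAt_id c).mul_const (v k)
    have h : HasDerivAt (fun t : ℝ => eval (t • v) p * (t * v k)) _ c := hp.mul h2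
    have hfun : (fun t : ℝ => eval (t • v) p * (t * v k)) = fun t : ℝ => eval (t • v) (p * X k) := by
      funext t
      simp [smul_eq_mul, mul_comm]
    rw [hfun] at h
    convert h using 1
    have : ∀ j : Fin n, v j * eval (c • v) (pderiv j (p * X k))
        = v j * eval (c • v) (pderiv j p) * (c * v k)
          + (if j = k then eval (c • v) p * v k else 0) := by
      intro j
      rcases eq_or_ne j k with h | h
      · subst h
        simp [pderiv_mul, pderiv_X, smul_eq_mul]
        ring
      · simp [pderiv_mul, pderiv_X_of_ne (Ne.symm h), h, smul_eq_mul]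
        ring
    rw [Finset.sum_congr rfl (fun j _ => this j), Finset.sum_add_distrib,
      Finset.sum_ite_eq' Finset.univ k, ← Finset.sum_mul]
    simp

/-- The velocity vector of a `1`-truncation. -/
def vv {m : ℕ} (i : Fin m) (a : Fin m → Fin 1 → ℝ) : Fin m → ℝ :=
  fun j => if j = i then 1 else a j 0

lemma truncCurve_eq {m : ℕ} (i : Fin m) (a : Fin m → Fin 1 → ℝ) (t : ℝ) :
    truncCurve 1 i a t = t • vv i a := by
  funext j
  simp only [truncCurve, vv, Pi.smul_apply, smul_eq_mul]
  rcases eq_or_ne j i with h | h <;> simp [h, mul_comm]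

lemma svanishing_iff {m : ℕ} (i : Fin m) (a : Fin m → Fin 1 → ℝ) (Q : MvPolynomial (Fin m) ℝ) :
    SVanishing 1 Q (truncCurve 1 i a) ↔
      ∀ ℓ : Fin m, coeff (Finsupp.single ℓ 1) Q = 0 ∧
        ∑ j, vv i a j * ((((Finsupp.single j 1 : Fin m →₀ ℕ) ℓ : ℝ) + 1)
          * coeff (Finsupp.single j 1 + Finsupp.single ℓ 1) Q) = 0 := by
  have hγ : ∀ ℓ : Fin m, (fun t => eval (truncCurve 1 i a t) (pderiv ℓ Q))
      = fun t : ℝ => eval (t • vv i a) (pderiv ℓ Q) := by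
    intro ℓ; funext t; rw [truncCurve_eq]
  have h0 : ∀ ℓ : Fin m, iteratedDeriv 0 (fun t => eval (truncCurve 1 i a t) (pderiv ℓ Q)) 0
      = coeff (Finsupp.single ℓ 1) Q := by
    intro ℓ
    rw [iteratedDeriv_zero]
    show eval (truncCurve 1 i a 0) (pderiv ℓ Q) = _
    rw [truncCurve_eq, zero_smul]
    rw [show eval (0 : Fin m → ℝ) (pderiv ℓ Q) = coeff 0 (pderiv ℓ Q) by
      simp [eval_zero', ← constantCoeff_eq]]
    rw [my_coeff_pderiv]
    simp
  have h1 : ∀ ℓ : Fin m, iteratedDeriv 1 (fun t => eval (truncCurve 1 i a t) (pderiv ℓ Q)) 0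
      = ∑ j, vv i a j * ((((Finsupp.single j 1 : Fin m →₀ ℕ) ℓ : ℝ) + 1)
          * coeff (Finsupp.single j 1 + Finsupp.single ℓ 1) Q) := by
    intro ℓ
    rw [iteratedDeriv_one, hγ ℓ, (hasDerivAt_eval_smul (vv i a) (pderiv ℓ Q) 0).deriv]
    congr 1
    funext j
    rw [show eval ((0:ℝ) • vv i a) (pderiv j (pderiv ℓ Q)) = coeff 0 (pderiv j (pderiv ℓ Q)) by
      rw [zero_smul]; simp [eval_zero', ← constantCoeff_eq]]
    rw [my_coeff_pderiv, my_coeff_pderiv]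
    simp [mul_assoc]
  constructor
  · intro h ℓ
    exact ⟨(h0 ℓ) ▸ h ℓ 0 (by norm_num), (h1 ℓ) ▸ h ℓ 1 le_rfl⟩
  · intro h ℓ α hα
    interval_cases α
    · rw [h0 ℓ]; exact (h ℓ).1
    · rw [h1 ℓ]; exact (h ℓ).2

lemma mem_of_approx (r m : ℕ) (K : ℝ) (i : Fin m) (P : MvPolynomial (Fin m) ℝ)
    (hP : ∀ n : ℕ, ∃ Q ∈ sigmaHatIK r m K i, polyNorm (P - Q) < 1 / (n + 1)) :
    P ∈ sigmaHatIK r m K i := by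
  choose Q hQmem hQnorm using hP
  have hQpoly : ∀ n, Q n ∈ PolySpace r m := fun n => (hQmem n).1
  choose a habd hvan using fun n => (hQmem n).2
  have hco : ∀ μ : Fin m →₀ ℕ,
      Filter.Tendsto (fun n => (Q n).coeff μ) Filter.atTop (nhds (P.coeff μ)) := by
    intro μ
    rw [tendsto_iff_dist_tendsto_zero]
    apply squeeze_zero (fun n => dist_nonneg) (fun n => ?_)
      tendsto_one_div_add_atTop_nhds_zero_nat
    rw [Real.dist_eq, abs_sub_comm]
    calc |P.coeff μ - (Q n).coeff μ| = |(P - Q n).coeff μ| := by rw [coeff_sub]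
      _ ≤ polyNorm (P - Q n) := abs_coeff_le_polyNorm _ μ
      _ ≤ 1 / (n + 1) := le_of_lt (hQnorm n)
  -- P ∈ PolySpace r m
  have hPpoly : P ∈ PolySpace r m := by
    constructor
    · have : Filter.Tendsto (fun n => (Q n).coeff 0) Filter.atTop (nhds (0 : ℝ)) := by
        simpa [fun n => (hQpoly n).1] using tendsto_const_nhds (x := (0:ℝ)) (f := Filter.atTop (α := ℕ))
      exact tendsto_nhds_unique (hco 0) this
    · rw [MvPolynomial.totalDegree]
      apply Finset.sup_le
      intro μ hμ
      by_contra hc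
      push_neg at hc
      have hz : ∀ n, (Q n).coeff μ = 0 := by
        intro n
        apply coeff_eq_zero_of_totalDegree_lt
        calc (Q n).totalDegree ≤ r := (hQpoly n).2
          _ < μ.sum fun _ e => e := hc
          _ = ∑ i ∈ μ.support, μ i := rfl
      have : P.coeff μ = 0 := by
        apply tendsto_nhds_unique (hco μ)
        simpa [hz] using tendsto_const_nhds (x := (0:ℝ)) (f := Filter.atTop (α := ℕ))
      exact (MvPolynomial.mem_support_iff.1 hμ) this
  -- compactness: extract a convergent subsequence of the parameters
  have hcpt : IsCompact (Set.univ.pi fun _ : Fin m => Set.univ.pi fun _ : Fin 1 =>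
      Set.Icc (-K) K) :=
    isCompact_univ_pi fun _ => isCompact_univ_pi fun _ => isCompact_Icc
  obtain ⟨b, hbmem, φ, hφ, hconv⟩ := hcpt.tendsto_subseq (x := a) (by
    intro n
    rw [Set.mem_univ_pi]
    intro j
    rw [Set.mem_univ_pi]
    intro k
    have hk : k = 0 := Fin.eq_zero k
    subst hk
    have := habd n j
    rw [abs_le] at this
    exact this)
  have hbbd : ∀ j : Fin m, |b j 0| ≤ K := by
    intro j
    have := (Set.mem_univ_pi.1 (Set.mem_univ_pi.1 hbmem j) 0)
    rw [abs_le]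
    exact ⟨this.1, this.2⟩
  -- subsequence convergences
  have hcoφ : ∀ μ : Fin m →₀ ℕ,
      Filter.Tendsto (fun n => (Q (φ n)).coeff μ) Filter.atTop (nhds (P.coeff μ)) :=
    fun μ => (hco μ).comp hφ.tendsto_atTop
  have hvconv : ∀ j : Fin m,
      Filter.Tendsto (fun n => vv i (a (φ n)) j) Filter.atTop (nhds (vv i b j)) := by
    intro j
    rcases eq_or_ne j i with h | h
    · simp only [vv, if_pos h]
      exact tendsto_const_nhds
    · simp only [vv, if_neg h]
      exact (((continuous_apply (0 : Fin 1)).comp (continuous_apply j)).tendsto b).comp hconv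
  refine ⟨hPpoly, b, hbbd, (svanishing_iff i b P).2 fun ℓ => ?_⟩
  constructor
  · apply tendsto_nhds_unique (hcoφ (Finsupp.single ℓ 1))
    have : ∀ n, (Q (φ n)).coeff (Finsupp.single ℓ 1) = 0 :=
      fun n => (((svanishing_iff i (a (φ n)) (Q (φ n))).1 (hvan (φ n))) ℓ).1
    simpa [this] using tendsto_const_nhds (x := (0:ℝ)) (f := Filter.atTop (α := ℕ))
  · have hlim : Filter.Tendsto (fun n => ∑ j, vv i (a (φ n)) j *
        ((((Finsupp.single j 1 : Fin m →₀ ℕ) ℓ : ℝ) + 1)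
          * (Q (φ n)).coeff (Finsupp.single j 1 + Finsupp.single ℓ 1)))
        Filter.atTop (nhds (∑ j, vv i b j *
        ((((Finsupp.single j 1 : Fin m →₀ ℕ) ℓ : ℝ) + 1)
          * P.coeff (Finsupp.single j 1 + Finsupp.single ℓ 1)))) := by
      apply tendsto_finset_sum
      intro j _
      exact (hvconv j).mul (Filter.Tendsto.const_mul _
        (hcoφ (Finsupp.single j 1 + Finsupp.single ℓ 1)))
    apply tendsto_nhds_unique hlim
    have : ∀ n, ∑ j, vv i (a (φ n)) j *
        ((((Finsupp.single j 1 : Fin m →₀ ℕ) ℓ : ℝ) + 1)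
          * (Q (φ n)).coeff (Finsupp.single j 1 + Finsupp.single ℓ 1)) = 0 :=
      fun n => (((svanishing_iff i (a (φ n)) (Q (φ n))).1 (hvan (φ n))) ℓ).2
    simpa [this] using tendsto_const_nhds (x := (0:ℝ)) (f := Filter.atTop (α := ℕ))

lemma subset_closureNorm {n : ℕ} (A : Set (MvPolynomial (Fin n) ℝ)) : A ⊆ closureNorm A :=
  fun P hP ε hε => ⟨P, hP, by simpa [sub_self, polyNorm_zero] using hε⟩

lemma closureNorm_sigmaHatIK (r m : ℕ) (K : ℝ) (i : Fin m) :
    closureNorm (sigmaHatIK r m K i) = sigmaHatIK r m K i := by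
  apply Set.Subset.antisymm _ (subset_closureNorm _)
  intro P hP
  apply mem_of_approx r m K i P
  intro n
  exact hP (1 / (n + 1)) (by positivity)

/-- Closedness of the set of `1`-vanishing polynomials with bounded linear coefficients. -/
theorem statement10 (r m : ℕ) (hr : 2 ≤ r) (hm : 2 ≤ m) (K : ℝ) (hK : 0 < K) :
    (∀ i : Fin m, closureNorm (sigmaHatIK r m K i) = sigmaHatIK r m K i) ∧
    closureNorm (⋃ i : Fin m, sigmaHatIK r m K i) = ⋃ i : Fin m, sigmaHatIK r m K i := by
  refine ⟨fun i => closureNorm_sigmaHatIK r m K i, ?_⟩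
  apply Set.Subset.antisymm _ (subset_closureNorm _)
  intro P hP
  have hP' : ∀ n : ℕ, ∃ Q ∈ ⋃ i : Fin m, sigmaHatIK r m K i, polyNorm (P - Q) < 1 / (n + 1) :=
    fun n => hP (1 / (n + 1)) (by positivity)
  choose Q hQmem hQnorm using hP'
  have : ∀ n, ∃ i : Fin m, Q n ∈ sigmaHatIK r m K i := fun n => Set.mem_iUnion.1 (hQmem n)
  choose idx hidx using this
  have : Nonempty (Fin m) := ⟨⟨0, by omega⟩⟩
  obtain ⟨i, hi⟩ := Finite.exists_infinite_fiber idx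
  have hiset : (idx ⁻¹' {i}).Infinite := Set.infinite_coe_iff.1 hi
  have hmem : P ∈ closureNorm (sigmaHatIK r m K i) := by
    intro ε hε
    obtain ⟨N, hN⟩ := exists_nat_one_div_lt hε
    obtain ⟨n, hn, hnN⟩ := hiset.exists_gt N
    refine ⟨Q n, ?_, ?_⟩
    · have h := hidx n
      rw [Set.mem_preimage, Set.mem_singleton_iff] at hn
      rwa [hn] at h
    · calc polyNorm (P - Q n) < 1 / (n + 1) := hQnorm n
        _ ≤ 1 / (N + 1) := by
            apply one_div_le_one_div_of_le (by positivity)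
            have : (N : ℝ) ≤ n := by exact_mod_cast le_of_lt hnN
            linarith
        _ < ε := hN
  rw [closureNorm_sigmaHatIK] at hmem
  exact Set.mem_iUnion.2 ⟨i, hmem⟩

end
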